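/- If Z has the extended skew-normal density f(z) = (1/Φ(τ)) φ(z) Φ(τ√(1+α²) + αz), then Var[Z] = 1 + ζ₂(τ)·δ², where ζ₂(x) = −ζ₁(x)·x − ζ₁(x)² with ζ₁(x) = φ(x)/Φ(x), and δ = α/√(1+α²). -/

import Mathlib

open MeasureTheory Real

noncomputable def phi (x : ℝ) : ℝ := (Real.sqrt (2 * Real.pi))⁻¹ * Real.exp (-x ^ 2 / 2)

noncomputable def Phi (x : ℝ) : ℝ := ∫ t in Set.Iic x, phi t

open Set Filter Topology

lemma phi_eq' (x : ℝ) : phi x = (Real.sqrt (2 * π))⁻¹ * Real.exp (-(1/2) * x ^ 2) := by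
  rw [phi]; ring_nf

lemma phi_pos (x : ℝ) : 0 < phi x :=
  mul_pos (inv_pos.2 (Real.sqrt_pos.2 (by positivity))) (exp_pos _)

lemma phi_nonneg (x : ℝ) : 0 ≤ phi x := (phi_pos x).le

lemma phi_neg (x : ℝ) : phi (-x) = phi x := by simp [phi]

lemma continuous_phi : Continuous phi := by
  unfold phi; fun_prop

lemma integrable_phi : Integrable phi := by
  have : phi = fun x => (Real.sqrt (2 * π))⁻¹ * Real.exp (-(1/2) * x ^ 2) := funext phi_eq'
  rw [this]
  exact (integrable_exp_neg_mul_sq (by norm_num : (0:ℝ) < 1/2)).const_mul _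

lemma integrable_mul_phi : Integrable (fun x => x * phi x) := by
  have : (fun x => x * phi x)
      = fun x => (Real.sqrt (2 * π))⁻¹ * (x * Real.exp (-(1/2) * x ^ 2)) := by
    funext x; rw [phi_eq']; ring
  rw [this]
  exact (integrable_mul_exp_neg_mul_sq (by norm_num : (0:ℝ) < 1/2)).const_mul _

lemma integrable_sq_phi : Integrable (fun x => x ^ 2 * phi x) := by
  have h2 : (fun x : ℝ => x ^ 2 * phi x)
      = fun x => (Real.sqrt (2 * π))⁻¹ * (x ^ (2:ℝ) * Real.exp (-(1/2) * x ^ 2)) := by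
    funext x
    rw [phi_eq', show x ^ (2:ℝ) = x ^ (2:ℕ) by rw [← Real.rpow_natCast x 2]; norm_num]
    ring
  rw [h2]
  exact (integrable_rpow_mul_exp_neg_mul_sq (by norm_num) (by norm_num)).const_mul _

lemma integral_phi : ∫ x, phi x = 1 := by
  simp_rw [phi_eq']
  rw [integral_const_mul, integral_gaussian]
  rw [show π / (1/2) = 2 * π by ring]
  rw [inv_mul_cancel₀ (by positivity)]

lemma hasDerivAt_phi (x : ℝ) : HasDerivAt phi (-x * phi x) x := by
  have h : HasDerivAt (fun y : ℝ => -y ^ 2 / 2) (-x) x := by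
    have : HasDerivAt (fun y : ℝ => -y ^ 2 / 2) (-(↑(2:ℕ) * x ^ (2 - 1)) / 2) x := (hasDerivAt_pow 2 x).neg.div_const 2
    convert this using 1
    push_cast; ring
  have h2 := (h.exp).const_mul ((Real.sqrt (2 * π))⁻¹)
  have h3 : HasDerivAt phi ((Real.sqrt (2 * π))⁻¹ * (Real.exp (-x ^ 2 / 2) * -x)) x := h2
  convert h3 using 1
  rw [phi]; ring

lemma tendsto_phi_atTop : Tendsto phi atTop (𝓝 0) := by
  have h : Tendsto (fun x : ℝ => -x ^ 2 / 2) atTop atBot := by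
    apply Tendsto.atBot_div_const (by norm_num : (0:ℝ) < 2)
    exact tendsto_neg_atTop_atBot.comp (tendsto_pow_atTop two_ne_zero)
  have h2 := (Real.tendsto_exp_atBot.comp h).const_mul ((Real.sqrt (2 * π))⁻¹)
  rw [mul_zero] at h2
  exact h2.congr fun x => by simp only [Function.comp_def]; rw [← phi]

lemma tendsto_phi_atBot : Tendsto phi atBot (𝓝 0) := by
  have := tendsto_phi_atTop.comp tendsto_neg_atBot_atTop
  simpa [Function.comp_def, phi_neg] using this

lemma tendsto_mul_phi_atTop : Tendsto (fun x : ℝ => x * phi x) atTop (𝓝 0) := by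
  have hlo := rpow_mul_exp_neg_mul_sq_isLittleO_exp_neg (b := 1/2) (by norm_num) 1
  have hg : Tendsto (fun x : ℝ => Real.exp (-(1/2) * x)) atTop (𝓝 0) := by
    apply Real.tendsto_exp_atBot.comp
    exact (tendsto_id.const_mul_atTop_of_neg (by norm_num)).congr (fun x => rfl)
  have h0 : Tendsto (fun x : ℝ => x ^ (1:ℝ) * Real.exp (-(1/2) * x ^ 2)) atTop (𝓝 0) :=
    hlo.tendsto_zero_of_tendsto hg
  have := h0.const_mul ((Real.sqrt (2 * π))⁻¹)
  rw [mul_zero] at this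
  refine this.congr fun x => ?_
  rw [Real.rpow_one, phi_eq']; ring

lemma tendsto_mul_phi_atBot : Tendsto (fun x : ℝ => x * phi x) atBot (𝓝 0) := by
  have := (tendsto_mul_phi_atTop.comp tendsto_neg_atBot_atTop).neg
  rw [neg_zero] at this
  refine this.congr fun x => ?_
  simp [Function.comp_def, phi_neg]

lemma integral_Iic_phi (c : ℝ) : ∫ x in Iic c, phi x = Phi c := rfl

lemma integral_Iic_mul_phi (c : ℝ) : ∫ x in Iic c, x * phi x = -phi c := by
  have h := integral_Iic_of_hasDerivAt_of_tendsto' (a := c) (f := fun x => -phi x)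
    (f' := fun x => x * phi x) (m := 0)
    (fun x _ => by convert (hasDerivAt_phi x).neg using 1; rfl; ring)
    integrable_mul_phi.integrableOn
    (by simpa using tendsto_phi_atBot.neg)
  simpa using h

lemma integral_Iic_sq_phi (c : ℝ) : ∫ x in Iic c, x ^ 2 * phi x = Phi c - c * phi c := by
  have hint : Integrable (fun x : ℝ => (x ^ 2 - 1) * phi x) := by
    have : (fun x : ℝ => (x ^ 2 - 1) * phi x) = fun x => x ^ 2 * phi x - phi x := by
      funext x; ring
    rw [this]; exact integrable_sq_phi.sub integrable_phi
  have h1 : ∫ x in Iic c, (x ^ 2 - 1) * phi x = -c * phi c := by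
    have h := integral_Iic_of_hasDerivAt_of_tendsto' (a := c) (f := fun x => -x * phi x)
      (f' := fun x => (x ^ 2 - 1) * phi x) (m := 0)
      (fun x _ => by
        have : HasDerivAt (fun x => -x * phi x) (-1 * phi x + (-x) * (-x * phi x)) x := ((hasDerivAt_id x).neg.mul (hasDerivAt_phi x))
        exact this.congr_deriv (by ring))
      hint.integrableOn
      (by simpa using tendsto_mul_phi_atBot.neg)
    simpa using h
  have h2 : ∫ x in Iic c, x ^ 2 * phi x
      = (∫ x in Iic c, (x ^ 2 - 1) * phi x) + ∫ x in Iic c, phi x := by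
    rw [← integral_add hint.integrableOn integrable_phi.integrableOn]
    congr 1; funext x; ring
  rw [h2, h1, integral_Iic_phi]; ring

lemma integral_Ioi_phi (c : ℝ) : ∫ x in Ioi c, phi x = 1 - Phi c := by
  have := intervalIntegral.integral_Iic_add_Ioi (b := c) integrable_phi.integrableOn integrable_phi.integrableOn
  rw [integral_phi] at this
  rw [← integral_Iic_phi]; linarith

lemma Phi_zero : Phi 0 = 1/2 := by
  have h1 : ∫ x in Ioi (0:ℝ), phi x = Phi 0 := by
    calc ∫ x in Ioi (0:ℝ), phi x = ∫ x in Ioi (0:ℝ), phi (-x) := by simp_rw [phi_neg]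
      _ = ∫ x in Iic (-(0:ℝ)), phi x := integral_comp_neg_Ioi _ _
      _ = Phi 0 := by rw [neg_zero, integral_Iic_phi]
  have h2 := integral_Ioi_phi 0
  rw [h1] at h2; linarith

lemma integral_mul_phi : ∫ x, x * phi x = 0 := by
  have h1 : ∫ x in Ioi (0:ℝ), x * phi x = phi 0 := by
    calc ∫ x in Ioi (0:ℝ), x * phi x = ∫ x in Ioi (0:ℝ), -(-x * phi (-x)) := by
          simp_rw [phi_neg]; congr 1; funext x; ring
      _ = -∫ x in Ioi (0:ℝ), (fun y => y * phi y) (-x) := by rw [integral_neg]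
      _ = -∫ x in Iic (-(0:ℝ)), x * phi x :=
          congrArg Neg.neg (integral_comp_neg_Ioi 0 (fun y => y * phi y))
      _ = phi 0 := by rw [neg_zero, integral_Iic_mul_phi]; simp
  have := intervalIntegral.integral_Iic_add_Ioi (b := (0:ℝ)) integrable_mul_phi.integrableOn
    integrable_mul_phi.integrableOn
  rw [← this, h1, integral_Iic_mul_phi]
  ring

lemma integral_sq_phi : ∫ x, x ^ 2 * phi x = 1 := by
  have h1 : ∫ x in Ioi (0:ℝ), x ^ 2 * phi x = Phi 0 := by
    calc ∫ x in Ioi (0:ℝ), x ^ 2 * phi x = ∫ x in Ioi (0:ℝ), (fun y => y ^ 2 * phi y) (-x) := by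
          simp_rw [phi_neg]; congr 1; funext x; simp [neg_pow]
      _ = ∫ x in Iic (-(0:ℝ)), x ^ 2 * phi x :=
          integral_comp_neg_Ioi 0 (fun y => y ^ 2 * phi y)
      _ = Phi 0 := by rw [neg_zero, integral_Iic_sq_phi]; simp
  have := intervalIntegral.integral_Iic_add_Ioi (b := (0:ℝ)) integrable_sq_phi.integrableOn
    integrable_sq_phi.integrableOn
  rw [← this, h1, integral_Iic_sq_phi, Phi_zero]
  norm_num

lemma Phi_nonneg (x : ℝ) : 0 ≤ Phi x :=
  setIntegral_nonneg measurableSet_Iic fun t _ => phi_nonneg t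

lemma Phi_le_one (x : ℝ) : Phi x ≤ 1 := by
  rw [← integral_phi]
  exact setIntegral_le_integral integrable_phi (ae_of_all _ phi_nonneg)

lemma Phi_pos (x : ℝ) : 0 < Phi x := by
  rw [Phi]
  refine (setIntegral_pos_iff_support_of_nonneg_ae
    (ae_of_all _ fun t => phi_nonneg t) integrable_phi.integrableOn).2 ?_
  have hsupp : Function.support phi = univ := eq_univ_of_forall fun t => (phi_pos t).ne'
  rw [hsupp, univ_inter, Real.volume_Iic]
  simp

lemma monotone_Phi : Monotone Phi := fun a b hab =>
  setIntegral_mono_set integrable_phi.integrableOn (ae_of_all _ phi_nonneg)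
    (HasSubset.Subset.eventuallyLE (Iic_subset_Iic.2 hab))

lemma measurable_Phi : Measurable Phi := monotone_Phi.measurable

section conv

variable {α s : ℝ}

lemma mul_phi_mul_phi (hs : 0 < s) (h2 : s ^ 2 = 1 + α ^ 2) (r z : ℝ) :
    phi z * phi (r + α * z) = phi (r / s) * phi (s * z + α * r / s) := by
  have hs0 : s ≠ 0 := hs.ne'
  simp only [phi]
  rw [mul_mul_mul_comm, ← Real.exp_add, mul_mul_mul_comm, ← Real.exp_add]
  congr 1
  rw [← add_div, ← add_div]
  congr 1
  have hkey : (r / s) ^ 2 + (s * z + α * r / s) ^ 2 = z ^ 2 + (r + α * z) ^ 2 := by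
    field_simp
    linear_combination (s ^ 2 * z ^ 2 - r ^ 2) * h2
  linarith [hkey]

lemma integral_comp_affine (hs : 0 < s) (h : ℝ → ℝ) (c : ℝ) :
    ∫ z : ℝ, h (s * z + c) = s⁻¹ * ∫ w : ℝ, h w := by
  calc ∫ z : ℝ, h (s * z + c) = |s⁻¹| • ∫ y : ℝ, h (y + c) :=
        Measure.integral_comp_mul_left (fun y => h (y + c)) s
    _ = s⁻¹ * ∫ w : ℝ, h w := by
        rw [integral_add_right_eq_self (fun y => h y) c, abs_of_pos (inv_pos.2 hs), smul_eq_mul]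

lemma inner0 (hs : 0 < s) (h2 : s ^ 2 = 1 + α ^ 2) (r : ℝ) :
    ∫ z : ℝ, phi z * phi (r + α * z) = s⁻¹ * phi (r / s) := by
  simp_rw [mul_phi_mul_phi hs h2 r]
  rw [integral_const_mul]
  have h := integral_comp_affine hs phi (α * r / s)
  rw [h, integral_phi, mul_one, mul_comm]

lemma inner1 (hs : 0 < s) (h2 : s ^ 2 = 1 + α ^ 2) (r : ℝ) :
    ∫ z : ℝ, z * (phi z * phi (r + α * z)) = -(α * r / s ^ 2) * (s⁻¹ * phi (r / s)) := by
  have hs0 : s ≠ 0 := hs.ne'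
  simp_rw [mul_phi_mul_phi hs h2 r, mul_left_comm _ (phi (r / s))]
  rw [integral_const_mul]
  set c := α * r / s with hc
  have hfun : ∀ z : ℝ, z * phi (s * z + c) = (fun w => (w - c) / s * phi w) (s * z + c) := by
    intro z; simp only; rw [add_sub_cancel_right, mul_div_cancel_left₀ _ hs0]
  simp_rw [hfun]
  rw [integral_comp_affine hs (fun w => (w - c) / s * phi w) c]
  have hint : ∫ w : ℝ, (w - c) / s * phi w = -c / s := by
    have : (fun w : ℝ => (w - c) / s * phi w)
        = fun w => s⁻¹ * (w * phi w) - (c / s) * phi w := by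
      funext w; field_simp
    rw [this, integral_sub ((integrable_mul_phi).const_mul _) (integrable_phi.const_mul _),
      integral_const_mul, integral_const_mul, integral_mul_phi, integral_phi]
    ring
  rw [hint, hc]
  field_simp

lemma inner2 (hs : 0 < s) (h2 : s ^ 2 = 1 + α ^ 2) (r : ℝ) :
    ∫ z : ℝ, z ^ 2 * (phi z * phi (r + α * z))
      = (1 + (α * r / s) ^ 2) / s ^ 2 * (s⁻¹ * phi (r / s)) := by
  have hs0 : s ≠ 0 := hs.ne'
  simp_rw [mul_phi_mul_phi hs h2 r, mul_left_comm _ (phi (r / s))]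
  rw [integral_const_mul]
  set c := α * r / s with hc
  have hfun : ∀ z : ℝ, z ^ 2 * phi (s * z + c) = (fun w => ((w - c) / s) ^ 2 * phi w) (s * z + c) := by
    intro z; simp only; rw [add_sub_cancel_right, mul_div_cancel_left₀ _ hs0]
  simp_rw [hfun]
  rw [integral_comp_affine hs (fun w => ((w - c) / s) ^ 2 * phi w) c]
  have hint : ∫ w : ℝ, ((w - c) / s) ^ 2 * phi w = (1 + c ^ 2) / s ^ 2 := by
    have : (fun w : ℝ => ((w - c) / s) ^ 2 * phi w)
        = fun w => (s ^ 2)⁻¹ * (w ^ 2 * phi w)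
            + ((-(2 * c / s ^ 2)) * (w * phi w) + (c ^ 2 / s ^ 2) * phi w) := by
      funext w; field_simp; ring
    rw [this]
    have h1 : Integrable (fun w : ℝ => (s ^ 2)⁻¹ * (w ^ 2 * phi w)) := integrable_sq_phi.const_mul _
    have hB : Integrable (fun w : ℝ => -(2 * c / s ^ 2) * (w * phi w)) :=
      integrable_mul_phi.const_mul _
    have hC : Integrable (fun w : ℝ => c ^ 2 / s ^ 2 * phi w) := integrable_phi.const_mul _
    calc ∫ w : ℝ, ((s ^ 2)⁻¹ * (w ^ 2 * phi w)
            + (-(2 * c / s ^ 2) * (w * phi w) + c ^ 2 / s ^ 2 * phi w))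
        = (∫ w : ℝ, (s ^ 2)⁻¹ * (w ^ 2 * phi w))
            + ∫ w : ℝ, (-(2 * c / s ^ 2) * (w * phi w) + c ^ 2 / s ^ 2 * phi w) :=
          integral_add h1 (hB.add hC)
      _ = (∫ w : ℝ, (s ^ 2)⁻¹ * (w ^ 2 * phi w))
            + ((∫ w : ℝ, -(2 * c / s ^ 2) * (w * phi w)) + ∫ w : ℝ, c ^ 2 / s ^ 2 * phi w) := by
          rw [integral_add hB hC]
      _ = (1 + c ^ 2) / s ^ 2 := by
          rw [integral_const_mul, integral_const_mul, integral_const_mul,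
            integral_sq_phi, integral_mul_phi, integral_phi]
          ring
  rw [hint, hc]
  field_simp

lemma Phi_shift (b w : ℝ) : Phi (b + w) = ∫ r in Iic b, phi (r + w) := by
  rw [Phi, ← integral_indicator measurableSet_Iic, ← integral_indicator measurableSet_Iic]
  rw [← integral_add_right_eq_self (fun t => (Iic (b + w)).indicator phi t) w]
  congr 1
  funext r
  simp [Set.indicator_apply, mem_Iic, add_le_add_iff_right]

lemma setIntegral_Iic_comp_mul_left (hs : 0 < s) (g : ℝ → ℝ) (u₀ : ℝ) :
    ∫ r in Iic (s * u₀), g r = s * ∫ u in Iic u₀, g (s * u) := by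
  have hs0 : s ≠ 0 := hs.ne'
  rw [← integral_indicator measurableSet_Iic, ← integral_indicator measurableSet_Iic]
  have key : ∀ u : ℝ, (Iic u₀).indicator (fun u => g (s * u)) u
      = (Iic (s * u₀)).indicator g (s * u) := by
    intro u
    by_cases hu : u ≤ u₀
    · rw [indicator_of_mem (by simpa using hu),
        indicator_of_mem (by simpa using (mul_le_mul_of_nonneg_left hu hs.le) : s * u ∈ Iic (s * u₀))]
    · rw [indicator_of_notMem (by simpa using hu), indicator_of_notMem]
      simp only [mem_Iic, not_le]
      exact (mul_lt_mul_iff_right₀ hs).2 (not_le.1 hu)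
  simp_rw [key]
  rw [Measure.integral_comp_mul_left ((Iic (s * u₀)).indicator g) s,
    abs_of_pos (inv_pos.2 hs), smul_eq_mul, ← mul_assoc, mul_inv_cancel₀ hs0, one_mul]

end conv

section fubini

variable {α : ℝ}

lemma F_integrable (b : ℝ) (k : ℕ) (hk : Integrable fun z : ℝ => |z| ^ k * phi z) :
    Integrable (Function.uncurry fun z r => z ^ k * (phi z * phi (r + α * z)))
      (volume.prod (volume.restrict (Iic b))) := by
  have hcont : Continuous (Function.uncurry fun z r : ℝ => z ^ k * (phi z * phi (r + α * z))) := by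
    apply Continuous.mul (by fun_prop)
    exact (continuous_phi.comp continuous_fst).mul
      (continuous_phi.comp (continuous_snd.add (continuous_const.mul continuous_fst)))
  rw [integrable_prod_iff hcont.aestronglyMeasurable]
  constructor
  · refine ae_of_all _ fun z => ?_
    show Integrable (fun r => z ^ k * (phi z * phi (r + α * z))) (volume.restrict (Iic b))
    have heq : (fun r => z ^ k * (phi z * phi (r + α * z)))
        = fun r => (z ^ k * phi z) * phi (r + α * z) := by
      funext r; ring
    rw [heq]
    exact ((integrable_phi.comp_add_right (α * z)).integrableOn).const_mul _
  · have heq : (fun z => ∫ r in Iic b, ‖z ^ k * (phi z * phi (r + α * z))‖)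
        = fun z => (|z| ^ k * phi z) * Phi (b + α * z) := by
      funext z
      have hn : ∀ r, ‖z ^ k * (phi z * phi (r + α * z))‖
          = (|z| ^ k * phi z) * phi (r + α * z) := by
        intro r
        rw [norm_eq_abs, abs_mul, abs_mul, abs_pow, abs_of_nonneg (phi_nonneg _),
          abs_of_nonneg (phi_nonneg _)]
        ring
      simp_rw [hn]
      rw [integral_const_mul, ← Phi_shift]
    show Integrable (fun z => ∫ r in Iic b, ‖z ^ k * (phi z * phi (r + α * z))‖) volume
    rw [heq]
    apply Integrable.mono' hk
    · apply AEStronglyMeasurable.mul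
      · exact ((measurable_id.abs.pow_const k).mul continuous_phi.measurable).aestronglyMeasurable
      · exact (measurable_Phi.comp (measurable_const.add
          (measurable_const.mul measurable_id))).aestronglyMeasurable
    · refine ae_of_all _ fun z => ?_
      rw [norm_eq_abs, abs_mul, abs_of_nonneg (Phi_nonneg _),
        abs_of_nonneg (mul_nonneg (pow_nonneg (abs_nonneg z) k) (phi_nonneg z))]
      calc |z| ^ k * phi z * Phi (b + α * z) ≤ |z| ^ k * phi z * 1 := by
            apply mul_le_mul_of_nonneg_left (Phi_le_one _)
            exact mul_nonneg (pow_nonneg (abs_nonneg z) k) (phi_nonneg z)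
        _ = |z| ^ k * phi z := mul_one _

lemma swap_eq (b : ℝ) (k : ℕ) (hk : Integrable fun z : ℝ => |z| ^ k * phi z) :
    ∫ z : ℝ, z ^ k * (phi z * Phi (b + α * z))
      = ∫ r in Iic b, ∫ z : ℝ, z ^ k * (phi z * phi (r + α * z)) := by
  have h1 : ∀ z : ℝ, z ^ k * (phi z * Phi (b + α * z))
      = ∫ r in Iic b, z ^ k * (phi z * phi (r + α * z)) := by
    intro z
    rw [Phi_shift, integral_const_mul, integral_const_mul]
  simp_rw [h1]
  exact integral_integral_swap (F_integrable b k hk)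

end fubini

lemma abs_pow_one_phi_int : Integrable (fun z : ℝ => |z| ^ 1 * phi z) := by
  have := integrable_mul_phi.abs
  refine this.congr (ae_of_all _ fun z => ?_)
  show |z * phi z| = |z| ^ 1 * phi z
  rw [abs_mul, abs_of_nonneg (phi_nonneg z), pow_one]

lemma abs_pow_two_phi_int : Integrable (fun z : ℝ => |z| ^ 2 * phi z) := by
  refine integrable_sq_phi.congr (ae_of_all _ fun z => ?_)
  show z ^ 2 * phi z = |z| ^ 2 * phi z
  rw [sq_abs]

section moments

variable {α s : ℝ}

lemma J1_eq (hs : 0 < s) (h2 : s ^ 2 = 1 + α ^ 2) (τ : ℝ) :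
    ∫ z : ℝ, z ^ 1 * (phi z * Phi (τ * s + α * z)) = α / s * phi τ := by
  have hs0 : s ≠ 0 := hs.ne'
  calc ∫ z : ℝ, z ^ 1 * (phi z * Phi (τ * s + α * z))
      = ∫ r in Iic (τ * s), ∫ z : ℝ, z ^ 1 * (phi z * phi (r + α * z)) :=
        swap_eq (τ * s) 1 abs_pow_one_phi_int
    _ = ∫ r in Iic (s * τ), -(α * r / s ^ 2) * (s⁻¹ * phi (r / s)) := by
        rw [mul_comm τ s]
        refine integral_congr_ae (ae_of_all _ fun r => ?_)
        simp_rw [pow_one]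
        exact inner1 hs h2 r
    _ = s * ∫ u in Iic τ, -(α * (s * u) / s ^ 2) * (s⁻¹ * phi (s * u / s)) :=
        setIntegral_Iic_comp_mul_left hs _ τ
    _ = s * ∫ u in Iic τ, -(α / s ^ 2) * (u * phi u) := by
        congr 1
        refine integral_congr_ae (ae_of_all _ fun u => ?_)
        show -(α * (s * u) / s ^ 2) * (s⁻¹ * phi (s * u / s)) = -(α / s ^ 2) * (u * phi u)
        rw [mul_div_cancel_left₀ _ hs0]
        field_simp
    _ = s * (-(α / s ^ 2) * ∫ u in Iic τ, u * phi u) := by rw [integral_const_mul]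
    _ = α / s * phi τ := by
        rw [integral_Iic_mul_phi]
        field_simp

end moments

section moments2

variable {α s : ℝ}

lemma J2_eq (hs : 0 < s) (h2 : s ^ 2 = 1 + α ^ 2) (τ : ℝ) :
    ∫ z : ℝ, z ^ 2 * (phi z * Phi (τ * s + α * z))
      = Phi τ - α ^ 2 / s ^ 2 * (τ * phi τ) := by
  have hs0 : s ≠ 0 := hs.ne'
  calc ∫ z : ℝ, z ^ 2 * (phi z * Phi (τ * s + α * z))
      = ∫ r in Iic (τ * s), ∫ z : ℝ, z ^ 2 * (phi z * phi (r + α * z)) :=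
        swap_eq (τ * s) 2 abs_pow_two_phi_int
    _ = ∫ r in Iic (s * τ), (1 + (α * r / s) ^ 2) / s ^ 2 * (s⁻¹ * phi (r / s)) := by
        rw [mul_comm τ s]
        refine integral_congr_ae (ae_of_all _ fun r => ?_)
        exact inner2 hs h2 r
    _ = s * ∫ u in Iic τ, (1 + (α * (s * u) / s) ^ 2) / s ^ 2 * (s⁻¹ * phi (s * u / s)) :=
        setIntegral_Iic_comp_mul_left hs _ τ
    _ = s * ∫ u in Iic τ, s⁻¹ * ((s ^ 2)⁻¹ * phi u + α ^ 2 / s ^ 2 * (u ^ 2 * phi u)) := by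
        congr 1
        refine integral_congr_ae (ae_of_all _ fun u => ?_)
        show (1 + (α * (s * u) / s) ^ 2) / s ^ 2 * (s⁻¹ * phi (s * u / s))
          = s⁻¹ * ((s ^ 2)⁻¹ * phi u + α ^ 2 / s ^ 2 * (u ^ 2 * phi u))
        rw [mul_div_cancel_left₀ _ hs0]
        field_simp
    _ = s * (s⁻¹ * ∫ u in Iic τ, ((s ^ 2)⁻¹ * phi u + α ^ 2 / s ^ 2 * (u ^ 2 * phi u))) := by
        rw [integral_const_mul]
    _ = ∫ u in Iic τ, ((s ^ 2)⁻¹ * phi u + α ^ 2 / s ^ 2 * (u ^ 2 * phi u)) := by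
        rw [← mul_assoc, mul_inv_cancel₀ hs0, one_mul]
    _ = (∫ u in Iic τ, (s ^ 2)⁻¹ * phi u) + ∫ u in Iic τ, α ^ 2 / s ^ 2 * (u ^ 2 * phi u) :=
        integral_add ((integrable_phi.const_mul _).integrableOn)
          ((integrable_sq_phi.const_mul _).integrableOn)
    _ = (s ^ 2)⁻¹ * Phi τ + α ^ 2 / s ^ 2 * (Phi τ - τ * phi τ) := by
        rw [integral_const_mul, integral_const_mul, integral_Iic_phi, integral_Iic_sq_phi]
    _ = Phi τ - α ^ 2 / s ^ 2 * (τ * phi τ) := by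
        field_simp
        linear_combination (-Phi τ) * h2

end moments2

noncomputable def zeta1 (x : ℝ) : ℝ := phi x / Phi x

noncomputable def zeta2 (x : ℝ) : ℝ := -(zeta1 x * x + (zeta1 x) ^ 2)

/-- ESN(0,1,α,τ) density -/
noncomputable def esnPdf (α τ z : ℝ) : ℝ :=
  (Phi τ)⁻¹ * phi z * Phi (τ * Real.sqrt (1 + α ^ 2) + α * z)

theorem esn_variance (α τ : ℝ) :
    (∫ z : ℝ, z ^ 2 * esnPdf α τ z) - (∫ z : ℝ, z * esnPdf α τ z) ^ 2 =
      1 + zeta2 τ * (α / Real.sqrt (1 + α ^ 2)) ^ 2 := by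
  set s := Real.sqrt (1 + α ^ 2) with hs_def
  have hs : 0 < s := Real.sqrt_pos.2 (by positivity)
  have h2 : s ^ 2 = 1 + α ^ 2 := Real.sq_sqrt (by positivity)
  have hP : Phi τ ≠ 0 := (Phi_pos τ).ne'
  have e2 : ∫ z : ℝ, z ^ 2 * esnPdf α τ z
      = (Phi τ)⁻¹ * ∫ z : ℝ, z ^ 2 * (phi z * Phi (τ * s + α * z)) := by
    rw [← integral_const_mul]
    refine integral_congr_ae (ae_of_all _ fun z => ?_)
    show z ^ 2 * esnPdf α τ z = (Phi τ)⁻¹ * (z ^ 2 * (phi z * Phi (τ * s + α * z)))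
    rw [esnPdf, ← hs_def]; ring
  have e1 : ∫ z : ℝ, z * esnPdf α τ z
      = (Phi τ)⁻¹ * ∫ z : ℝ, z ^ 1 * (phi z * Phi (τ * s + α * z)) := by
    rw [← integral_const_mul]
    refine integral_congr_ae (ae_of_all _ fun z => ?_)
    show z * esnPdf α τ z = (Phi τ)⁻¹ * (z ^ 1 * (phi z * Phi (τ * s + α * z)))
    rw [esnPdf, ← hs_def]; ring
  rw [e1, e2, J1_eq hs h2 τ, J2_eq hs h2 τ, zeta2, zeta1]
  field_simp
  ring
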